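/- Let G = (V,E) be a finite DAG with a topological ordering v1,...,vn, and let P be a property of subsets of V (intended: the corresponding assignment satisfies a formula φ) such that: (i) P(∅) holds; (ii) P(D(v)) holds for every v ∈ V, where D(v) is the set of descendants of v including v; (iii) P is closed under unions of closed sets in the following sense: whenever A, B are closed sets with P(A), P(B), and P(A ∩ B), then P(A ∪ B). Then P(S) holds for every closed set S ⊆ V. -/

import Mathlib

/-- A set `S` is closed if every edge leaving `S` stays in `S`. -/
def IsClosed' {V : Type*} (E : V → V → Prop) (S : Set V) : Prop :=
  ∀ u v, E u v → u ∈ S → v ∈ S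

/-- Abstract induction over a finite DAG: if a property `P` of vertex sets holds
for the empty set and for every descendant set `D(v)`, and is closed under unions
of closed sets (given `P` for both sets and their intersection), then `P` holds
for every closed set. -/
theorem closed_sets_induction {V : Type*} [Fintype V] (E : V → V → Prop)
    (rank : V → ℕ) (htopo : ∀ u v, E u v → rank u < rank v)
    (P : Set V → Prop)
    (hempty : P ∅)
    (hD : ∀ v : V, P {u | Relation.ReflTransGen E v u})
    (hunion : ∀ A B : Set V, IsClosed' E A → IsClosed' E B →
      P A → P B → P (A ∩ B) → P (A ∪ B)) :
    ∀ S : Set V, IsClosed' E S → P S := by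
  classical
  suffices h : ∀ n, ∀ S : Set V, IsClosed' E S → S.ncard ≤ n → P S by
    intro S hS
    exact h S.ncard S hS le_rfl
  intro n
  induction n with
  | zero =>
    intro S hS hc
    have : S = ∅ := (Set.ncard_eq_zero (S.toFinite)).mp (Nat.le_zero.mp hc)
    rw [this]; exact hempty
  | succ n ih =>
    intro S hS hc
    rcases S.eq_empty_or_nonempty with rfl | hne
    · exact hempty
    obtain ⟨v, hv, hmin⟩ := S.exists_min_image rank S.toFinite hne
    have hDsub : {u | Relation.ReflTransGen E v u} ⊆ S := by
      intro u hu
      induction hu with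
      | refl => exact hv
      | tail _ h ih2 => exact hS _ _ h ih2
    have hA : IsClosed' E (S \ {v}) := by
      intro a b hab ha
      refine ⟨hS a b hab ha.1, ?_⟩
      intro hbv
      have h1 := htopo a b hab
      have h2 := hmin a ha.1
      rw [Set.mem_singleton_iff.mp hbv] at h1
      omega
    have hB : IsClosed' E {u | Relation.ReflTransGen E v u} := by
      intro a b hab ha
      exact Relation.ReflTransGen.tail ha hab
    have hcardA : (S \ {v}).ncard ≤ n := by
      have := Set.ncard_diff_singleton_lt_of_mem hv S.toFinite
      omega
    have hPA : P (S \ {v}) := ih _ hA hcardA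
    have hPI : P ((S \ {v}) ∩ {u | Relation.ReflTransGen E v u}) := by
      refine ih _ ?_ ?_
      · intro a b hab ha
        exact ⟨hA a b hab ha.1, hB a b hab ha.2⟩
      · exact le_trans (Set.ncard_le_ncard Set.inter_subset_left S.toFinite.diff) hcardA
    have hU := hunion _ _ hA hB hPA (hD v) hPI
    have : (S \ {v}) ∪ {u | Relation.ReflTransGen E v u} = S := by
      apply Set.Subset.antisymm
      · rintro x (hx | hx)
        · exact hx.1
        · exact hDsub hx
      · intro x hx
        by_cases hxv : x = v
        · exact Or.inr (hxv ▸ Relation.ReflTransGen.refl)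
        · exact Or.inl ⟨hx, hxv⟩
    rwa [this] at hU
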